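/- If J > K and (x_n)_{n∈ℤ} is a real sequence with x_n + x_{n+1} ≤ K for infinitely many n tending to −∞, then there exists at most one sequence (u_n)_{n∈ℤ} satisfying u_n = x_n − max{x_n + u_{n−1} − K, 0} + max{x_n + u_{n−1} − J, 0} for all n. In particular, if x_n + x_{n+1} ≤ K then any such solution satisfies u_{n+1} = x_{n+1}. -/
import Mathlib


theorem udKdV_carrier_uniqueness (J K : ℝ) (hJK : K < J)
    (x : ℤ → ℝ)
    (hsync : ∀ N : ℤ, ∃ n : ℤ, n < N ∧ x n + x (n + 1) ≤ K) :
    ((∀ u u' : ℤ → ℝ,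
        (∀ n : ℤ, u n = x n - max (x n + u (n - 1) - K) 0 + max (x n + u (n - 1) - J) 0) →
        (∀ n : ℤ, u' n = x n - max (x n + u' (n - 1) - K) 0 + max (x n + u' (n - 1) - J) 0) →
        u = u') ∧
      (∀ u : ℤ → ℝ,
        (∀ n : ℤ, u n = x n - max (x n + u (n - 1) - K) 0 + max (x n + u (n - 1) - J) 0) →
        ∀ n : ℤ, x n + x (n + 1) ≤ K → u (n + 1) = x (n + 1))) := by
  have hle : ∀ u : ℤ → ℝ,
      (∀ n : ℤ, u n = x n - max (x n + u (n - 1) - K) 0 + max (x n + u (n - 1) - J) 0) →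
      ∀ n : ℤ, u n ≤ x n := by
    intro u hu n
    rw [hu n]
    have h1 : max (x n + u (n - 1) - J) 0 ≤ max (x n + u (n - 1) - K) 0 :=
      max_le_max (by linarith) le_rfl
    linarith
  have key : ∀ u : ℤ → ℝ,
      (∀ n : ℤ, u n = x n - max (x n + u (n - 1) - K) 0 + max (x n + u (n - 1) - J) 0) →
      ∀ n : ℤ, x n + x (n + 1) ≤ K → u (n + 1) = x (n + 1) := by
    intro u hu n hn
    have h1 : u n ≤ x n := hle u hu n
    have e : (n + 1) - 1 = n := by ring
    have h2 : x (n + 1) + u ((n + 1) - 1) - K ≤ 0 := by rw [e]; linarith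
    have h3 : x (n + 1) + u ((n + 1) - 1) - J ≤ 0 := by linarith
    rw [hu (n + 1), max_eq_right h2, max_eq_right h3]
    ring
  refine ⟨?_, fun u hu n hn => key u hu n hn⟩
  intro u u' hu hu'
  funext n
  obtain ⟨m, hmn, hm⟩ := hsync n
  have base : u (m + 1) = u' (m + 1) := by rw [key u hu m hm, key u' hu' m hm]
  have step : ∀ k : ℕ, u (m + 1 + k) = u' (m + 1 + k) := by
    intro k
    induction k with
    | zero => simpa using base
    | succ k ih =>
      have e : (m + 1 + ((k : ℤ) + 1)) - 1 = m + 1 + (k : ℤ) := by ring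
      rw [hu, hu']
      push_cast
      rw [e, ih]
  obtain ⟨k, hk⟩ := Int.le.dest (by linarith : m + 1 ≤ n)
  rw [← hk]; exact step k
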